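/- Let g : ℝ⁴ \ {x : x·x = 0} → ℝ be defined by g(β) = (β·β)⁻¹. Then g satisfies the wave equation □g = 0 at every point β with β·β ≠ 0, i.e. ∂₀²g(β) − ∂₁²g(β) − ∂₂²g(β) − ∂₃²g(β) = 0. -/

import Mathlib

noncomputable section

/-- Minkowski inner product on ℝ⁴: x·y = x₀y₀ − x₁y₁ − x₂y₂ − x₃y₃. -/
def mink (x y : Fin 4 → ℝ) : ℝ := x 0 * y 0 - x 1 * y 1 - x 2 * y 2 - x 3 * y 3

/-- Partial derivative in the ν-th coordinate direction. -/
def pd {E : Type*} [NormedAddCommGroup E] [NormedSpace ℝ E]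
    (ν : Fin 4) (f : (Fin 4 → ℝ) → E) (x : Fin 4 → ℝ) : E :=
  fderiv ℝ f x (Pi.single ν 1)

/-- The d'Alembertian □ = ∂₀² − ∂₁² − ∂₂² − ∂₃². -/
def box {E : Type*} [NormedAddCommGroup E] [NormedSpace ℝ E]
    (f : (Fin 4 → ℝ) → E) (x : Fin 4 → ℝ) : E :=
  pd 0 (pd 0 f) x - pd 1 (pd 1 f) x - pd 2 (pd 2 f) x - pd 3 (pd 3 f) x

namespace WaveAux

def Q : (Fin 4 → ℝ) → ℝ := fun x => mink x x

def eps : Fin 4 → ℝ := ![1, -1, -1, -1]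

def proj (i : Fin 4) : (Fin 4 → ℝ) →L[ℝ] ℝ := ContinuousLinearMap.proj i

def Dm (x : Fin 4 → ℝ) : (Fin 4 → ℝ) →L[ℝ] ℝ :=
  (2 * x 0) • proj 0 - (2 * x 1) • proj 1 - (2 * x 2) • proj 2 - (2 * x 3) • proj 3

lemma hasFDerivAt_Q (x : Fin 4 → ℝ) : HasFDerivAt Q (Dm x) x := by
  have h : ∀ i : Fin 4, HasFDerivAt (fun y : Fin 4 → ℝ => y i * y i)
      ((2 * x i) • proj i) x := by
    intro i
    have := ((proj i).hasFDerivAt (x := x)).mul ((proj i).hasFDerivAt (x := x))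
    simp only [proj, ContinuousLinearMap.proj_apply] at this ⊢
    refine this.congr_fderiv ?_
    rw [two_mul, add_smul]
  exact (((h 0).sub (h 1)).sub (h 2)).sub (h 3)

lemma Dm_apply (x : Fin 4 → ℝ) (ν : Fin 4) :
    Dm x (Pi.single ν 1) = 2 * eps ν * x ν := by
  fin_cases ν <;> simp [Dm, proj, eps, Pi.single_apply]

lemma eps_sq (ν : Fin 4) : eps ν * eps ν = 1 := by
  fin_cases ν <;> norm_num [eps]

lemma contQ : Continuous Q := by
  unfold Q mink; continuity

lemma hasFDerivAt_invQ (x : Fin 4 → ℝ) (hx : Q x ≠ 0) :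
    HasFDerivAt (fun y => (Q y)⁻¹)
      ((-(ContinuousLinearMap.mulLeftRight ℝ ℝ (Q x)⁻¹ (Q x)⁻¹)).comp (Dm x)) x := by
  exact (hasFDerivAt_inv' (𝕜 := ℝ) hx).comp x (hasFDerivAt_Q x)

lemma pd_g (ν : Fin 4) (x : Fin 4 → ℝ) (hx : Q x ≠ 0) :
    pd ν (fun y => (Q y)⁻¹) x = -((Q x * Q x)⁻¹) * (2 * eps ν * x ν) := by
  rw [pd, (hasFDerivAt_invQ x hx).fderiv]
  simp [Dm_apply, ContinuousLinearMap.mulLeftRight_apply, mul_inv]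
  ring

lemma pd2_g (ν : Fin 4) (β : Fin 4 → ℝ) (hβ : Q β ≠ 0) :
    pd ν (pd ν (fun y => (Q y)⁻¹)) β
      = 8 * β ν ^ 2 * ((Q β)^3)⁻¹ - 2 * eps ν * ((Q β)^2)⁻¹ := by
  have hopen : IsOpen {x : Fin 4 → ℝ | Q x ≠ 0} := isOpen_ne.preimage contQ
  have hev : pd ν (fun y => (Q y)⁻¹)
      =ᶠ[nhds β] fun x => -((Q x * Q x)⁻¹) * (2 * eps ν * x ν) := by
    filter_upwards [hopen.mem_nhds hβ] with x hx
    exact pd_g ν x hx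
  rw [pd, hev.fderiv_eq]
  have hw : HasFDerivAt (fun x => Q x * Q x) (Q β • Dm β + Q β • Dm β) β :=
    (hasFDerivAt_Q β).mul (hasFDerivAt_Q β)
  have hwne : Q β * Q β ≠ 0 := mul_ne_zero hβ hβ
  have hinv : HasFDerivAt (fun x => (Q x * Q x)⁻¹)
      ((-(ContinuousLinearMap.mulLeftRight ℝ ℝ (Q β * Q β)⁻¹ (Q β * Q β)⁻¹)).comp
        (Q β • Dm β + Q β • Dm β)) β :=
    (hasFDerivAt_inv' (𝕜 := ℝ) hwne).comp β hw
  have hneg := hinv.neg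
  have hb : HasFDerivAt (fun x : Fin 4 → ℝ => 2 * eps ν * x ν)
      ((2 * eps ν) • proj ν) β := by
    have := ((proj ν).hasFDerivAt (x := β)).const_mul (2 * eps ν)
    simpa [proj] using this
  have hmul := hneg.mul hb
  rw [show (fun x => -(Q x * Q x)⁻¹ * (2 * eps ν * x ν)) =
      ((-fun x => (Q x * Q x)⁻¹) * fun x : Fin 4 → ℝ => 2 * eps ν * x ν) from rfl, hmul.fderiv]
  have hproj : proj ν (Pi.single ν 1) = (1 : ℝ) := by
    simp [proj, Pi.single_apply]
  simp only [ContinuousLinearMap.add_apply, ContinuousLinearMap.smul_apply,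
    ContinuousLinearMap.neg_apply, ContinuousLinearMap.comp_apply,
    ContinuousLinearMap.mulLeftRight_apply, Dm_apply, hproj, smul_eq_mul, Pi.neg_apply]
  have he : eps ν ^ 2 = 1 := by rw [sq, eps_sq]
  field_simp
  ring_nf
  rw [he]
  ring

end WaveAux

/-- The function g(β) = (β·β)⁻¹ satisfies the wave equation □g = 0 at every
point β with β·β ≠ 0. -/
theorem wave_equation_inv_minkowski_sq :
    ∀ β : Fin 4 → ℝ, mink β β ≠ 0 →
      box (fun β' => (mink β' β')⁻¹) β = 0 := by
  intro β hβ
  have hQ : WaveAux.Q β ≠ 0 := hβ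
  show box (fun β' => (WaveAux.Q β')⁻¹) β = 0
  rw [box, WaveAux.pd2_g 0 β hQ, WaveAux.pd2_g 1 β hQ, WaveAux.pd2_g 2 β hQ,
    WaveAux.pd2_g 3 β hQ]
  have hq : WaveAux.Q β = β 0 ^ 2 - β 1 ^ 2 - β 2 ^ 2 - β 3 ^ 2 := by
    simp [WaveAux.Q, mink]; ring
  simp only [WaveAux.eps, Matrix.cons_val_zero, Matrix.cons_val_one, Matrix.head_cons,
    Matrix.cons_val_two, Matrix.tail_cons, Matrix.cons_val_three]
  field_simp
  rw [hq]
  ring
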